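/- Dual cone of the set of copy-correlated k-undistillable states: let k ≥ 1 and let X be a Hermitian matrix on ℋ = ℂ^d⊗ℂ^d belonging to the dual cone T_k*. Then there exist a Hermitian matrix Y on ℋ^{⊗k} in the dual cone of the set of states on ℋ^{⊗k} that are single-copy undistillable across the cut grouping all A-factors against all B-factors, and a Hermitian matrix Q on ℋ^{⊗k} in the dual cone of the set of permutation-symmetric states on ℋ^{⊗k}, such that X ⊗ I^{⊗(k−1)} = Y + Q. -/

import Mathlib

open scoped BigOperators ComplexOrder
open Matrix MeasureTheory

noncomputable section

/-- A quantum state: a positive semidefinite complex matrix of unit trace. -/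
def IsState {n : Type} [Fintype n] (M : Matrix n n ℂ) : Prop :=
  M.PosSemidef ∧ M.trace = 1

/-- Kronecker product of rectangular complex matrices. -/
def kron {I J K L : Type} (A : Matrix I J ℂ) (B : Matrix K L ℂ) :
    Matrix (I × K) (J × L) ℂ :=
  Matrix.of fun p q => A p.1 q.1 * B p.2 q.2

/-- The projector onto the maximally entangled vector `(1/√D) ∑ᵢ |i,i⟩`. -/
def phiD (D : ℕ) : Matrix (Fin D × Fin D) (Fin D × Fin D) ℂ :=
  Matrix.of fun p q => if p.1 = p.2 ∧ q.1 = q.2 then (1 / (D : ℂ)) else 0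

/-- Single-copy undistillability (trace form):
`tr[(A ⊗ B) ω (A ⊗ B)† (φ₂ − I₄/2)] ≤ 0` for all 2 × m matrices A, B. -/
def SingleCopyUndistillable {I : Type} [Fintype I] [DecidableEq I]
    (ω : Matrix (I × I) (I × I) ℂ) : Prop :=
  ∀ A B : Matrix (Fin 2) I ℂ,
    (Matrix.trace (kron A B * ω * (kron A B)ᴴ * (phiD 2 - (1 / 2 : ℂ) • 1))).re ≤ 0

/-- The SLOCC `D`-dimensional singlet fraction. -/
def singletFraction (D : ℕ) {I : Type} [Fintype I] [DecidableEq I]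
    (ω : Matrix (I × I) (I × I) ℂ) : ℝ :=
  sSup {r : ℝ | ∃ A B : Matrix (Fin D) I ℂ,
    Matrix.trace (kron A B * ω * (kron A B)ᴴ) ≠ 0 ∧
    r = (Matrix.trace (kron A B * ω * (kron A B)ᴴ * phiD D)).re /
        (Matrix.trace (kron A B * ω * (kron A B)ᴴ)).re}

/-- Single-copy undistillability, singlet-fraction form: `F₂(ω) = 1/2`. -/
def SingleCopyUndistillableF {I : Type} [Fintype I] [DecidableEq I]
    (ω : Matrix (I × I) (I × I) ℂ) : Prop :=
  singletFraction 2 ω = 1 / 2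

/-- `n`-fold tensor power of a bipartite state, with all A-factors grouped on one
side and all B-factors on the other. -/
def tensorPow {ι : Type} [Fintype ι] (ρ : Matrix (ι × ι) (ι × ι) ℂ) (n : ℕ) :
    Matrix ((Fin n → ι) × (Fin n → ι)) ((Fin n → ι) × (Fin n → ι)) ℂ :=
  Matrix.of fun x y => ∏ i : Fin n, ρ (x.1 i, x.2 i) (y.1 i, y.2 i)

/-- Permutation symmetry of a state on `ℋ^{⊗k}`: `P_π ω P_π = ω` for every `π ∈ S_k`,
expressed entrywise. -/
def PermSymmetric {ι : Type} {k : ℕ}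
    (ω : Matrix ((Fin k → ι) × (Fin k → ι)) ((Fin k → ι) × (Fin k → ι)) ℂ) : Prop :=
  ∀ (π : Equiv.Perm (Fin k)) x y,
    ω (x.1 ∘ π, x.2 ∘ π) (y.1 ∘ π, y.2 ∘ π) = ω x y

def fillAt {ι : Type} {k : ℕ} (m : Fin k) (a : ι)
    (r : {i : Fin k // i ≠ m} → ι) : Fin k → ι :=
  fun i => if h : i = m then a else r ⟨i, h⟩

/-- Partial trace over all bipartite factors except the `m`-th one. -/
def reduceAt {ι : Type} [Fintype ι] {k : ℕ} (m : Fin k)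
    (ω : Matrix ((Fin k → ι) × (Fin k → ι)) ((Fin k → ι) × (Fin k → ι)) ℂ) :
    Matrix (ι × ι) (ι × ι) ℂ :=
  Matrix.of fun p q =>
    ∑ rA : {i : Fin k // i ≠ m} → ι, ∑ rB : {i : Fin k // i ≠ m} → ι,
      ω (fillAt m p.1 rA, fillAt m p.2 rB) (fillAt m q.1 rA, fillAt m q.2 rB)

/-- Copy-correlated `k`-undistillability (trace form of single-copy undistillability):
there is a permutation-symmetric single-copy-undistillable extension on `ℋ^{⊗k}`
whose reduction to the first bipartite factor is `ρ`. -/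
def CopyCorrKUndistillable (ι : Type) [Fintype ι] [DecidableEq ι] (k : ℕ) (hk : 0 < k)
    (ρ : Matrix (ι × ι) (ι × ι) ℂ) : Prop :=
  ∃ ω : Matrix ((Fin k → ι) × (Fin k → ι)) ((Fin k → ι) × (Fin k → ι)) ℂ,
    IsState ω ∧ PermSymmetric ω ∧ SingleCopyUndistillable ω ∧
      reduceAt (⟨0, hk⟩ : Fin k) ω = ρ

/-- Copy-correlated `k`-undistillability (singlet-fraction form). -/
def CopyCorrKUndistillableF (ι : Type) [Fintype ι] [DecidableEq ι] (k : ℕ) (hk : 0 < k)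
    (ρ : Matrix (ι × ι) (ι × ι) ℂ) : Prop :=
  ∃ ω : Matrix ((Fin k → ι) × (Fin k → ι)) ((Fin k → ι) × (Fin k → ι)) ℂ,
    IsState ω ∧ PermSymmetric ω ∧ SingleCopyUndistillableF ω ∧
      reduceAt (⟨0, hk⟩ : Fin k) ω = ρ

/-- Dual cone of a set of matrices, inside the Hermitian matrices. -/
def dualCone {n : Type} [Fintype n] (M : Set (Matrix n n ℂ)) : Set (Matrix n n ℂ) :=
  {X | X.IsHermitian ∧ ∀ ρ ∈ M, 0 ≤ (Matrix.trace (X * ρ)).re}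

/-- Separability: membership in the closed convex hull of the product states. -/
def SeparableState {ι : Type} [Fintype ι] (σ : Matrix (ι × ι) (ι × ι) ℂ) : Prop :=
  σ ∈ closure (convexHull ℝ
    {M : Matrix (ι × ι) (ι × ι) ℂ | ∃ α β : Matrix ι ι ℂ,
      IsState α ∧ IsState β ∧ M = kron α β})

/-- Trace norm `‖X‖₁ = tr √(X†X)`. -/
def traceNorm {n : Type} [Fintype n] [DecidableEq n] (X : Matrix n n ℂ) : ℝ :=
  (((Matrix.posSemidef_conjTranspose_mul_self X).1.eigenvectorUnitary : Matrix n n ℂ) *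
    Matrix.diagonal (fun i => ((√((Matrix.posSemidef_conjTranspose_mul_self X).1.eigenvalues i)
      : ℝ) : ℂ)) *
    (star (Matrix.posSemidef_conjTranspose_mul_self X).1.eigenvectorUnitary :
      Matrix n n ℂ)).trace.re

/-- Symmetrization `Ŝ_k(Q) = (1/k!) ∑_{π ∈ S_k} P_π Q P_π`. -/
def symmetrize {ι : Type} {k : ℕ}
    (Q : Matrix ((Fin k → ι) × (Fin k → ι)) ((Fin k → ι) × (Fin k → ι)) ℂ) :
    Matrix ((Fin k → ι) × (Fin k → ι)) ((Fin k → ι) × (Fin k → ι)) ℂ :=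
  (1 / (Nat.factorial k : ℂ)) •
    ∑ π : Equiv.Perm (Fin k),
      Matrix.of fun x y => Q (x.1 ∘ π, x.2 ∘ π) (y.1 ∘ π, y.2 ∘ π)


instance matMeasurableSpace {m n : Type} [Fintype m] [Fintype n] :
    MeasurableSpace (Matrix m n ℂ) := borel _

/-- Partial trace over the last `n − k` bipartite factors. -/
def traceTail {ι : Type} [Fintype ι] {n k : ℕ} (h : k ≤ n)
    (ω : Matrix ((Fin n → ι) × (Fin n → ι)) ((Fin n → ι) × (Fin n → ι)) ℂ) :
    Matrix ((Fin k → ι) × (Fin k → ι)) ((Fin k → ι) × (Fin k → ι)) ℂ :=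
  Matrix.of fun x y =>
    ∑ tA : Fin (n - k) → ι, ∑ tB : Fin (n - k) → ι,
      ω (fun i => Fin.append x.1 tA (Fin.cast (by omega) i),
         fun i => Fin.append x.2 tB (Fin.cast (by omega) i))
        (fun i => Fin.append y.1 tA (Fin.cast (by omega) i),
         fun i => Fin.append y.2 tB (Fin.cast (by omega) i))

/-- Partial trace over the last bipartite factor. -/
def traceLast {ι : Type} [Fintype ι] {k : ℕ}
    (ω : Matrix ((Fin (k + 1) → ι) × (Fin (k + 1) → ι))
      ((Fin (k + 1) → ι) × (Fin (k + 1) → ι)) ℂ) :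
    Matrix ((Fin k → ι) × (Fin k → ι)) ((Fin k → ι) × (Fin k → ι)) ℂ :=
  Matrix.of fun x y => ∑ a : ι, ∑ b : ι,
    ω (Fin.snoc x.1 a, Fin.snoc x.2 b) (Fin.snoc y.1 a, Fin.snoc y.2 b)

/-- `X ⊗ I^{⊗(k−1)}`: the operator acting as `X` on the first bipartite factor
and as the identity on the remaining `k − 1` factors. -/
def firstFactorOp {ι : Type} [DecidableEq ι] (k : ℕ) (hk : 0 < k)
    (X : Matrix (ι × ι) (ι × ι) ℂ) :
    Matrix ((Fin k → ι) × (Fin k → ι)) ((Fin k → ι) × (Fin k → ι)) ℂ :=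
  Matrix.of fun x y =>
    X (x.1 ⟨0, hk⟩, x.2 ⟨0, hk⟩) (y.1 ⟨0, hk⟩, y.2 ⟨0, hk⟩) *
      ∏ i : Fin k, if i = ⟨0, hk⟩ then 1
        else (if x.1 i = y.1 i ∧ x.2 i = y.2 i then 1 else 0)

/-- `⟨φ| ⊗ I₂` with `|φ⟩ = ∑ᵢ |i,i⟩` the unnormalized maximally entangled vector. -/
def jamA (d : ℕ) : Matrix (Fin 2) ((Fin d × Fin d) × Fin 2) ℂ :=
  Matrix.of fun s p => (if p.1.1 = p.1.2 then (1 : ℂ) else 0) * (if s = p.2 then 1 else 0)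

/-- `σ ⊗ ρ` with tensor factors ordered as `((A₂A₁A₃), (B₂B₁B₃))`. -/
def jamState (d : ℕ) (σ : Matrix (Fin d × Fin d) (Fin d × Fin d) ℂ)
    (ρ : Matrix ((Fin d × Fin 2) × (Fin d × Fin 2))
      ((Fin d × Fin 2) × (Fin d × Fin 2)) ℂ) :
    Matrix (((Fin d × Fin d) × Fin 2) × ((Fin d × Fin d) × Fin 2))
      (((Fin d × Fin d) × Fin 2) × ((Fin d × Fin d) × Fin 2)) ℂ :=
  Matrix.of fun x y =>
    σ (x.1.1.1, x.2.1.1) (y.1.1.1, y.2.1.1) *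
      ρ ((x.1.1.2, x.1.2), (x.2.1.2, x.2.2)) ((y.1.1.2, y.1.2), (y.2.1.2, y.2.2))

/-- Joint operator `ρ ⊗ σ`, regrouped as a bipartite operator across the cut
joining both A-parts against both B-parts. -/
def jointState {ι κ : Type} (ρ : Matrix (ι × ι) (ι × ι) ℂ)
    (σ : Matrix (κ × κ) (κ × κ) ℂ) :
    Matrix ((ι × κ) × (ι × κ)) ((ι × κ) × (ι × κ)) ℂ :=
  Matrix.of fun x y =>
    ρ (x.1.1, x.2.1) (y.1.1, y.2.1) * σ (x.1.2, x.2.2) (y.1.2, y.2.2)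



section MainAux
set_option linter.unusedSectionVars false
variable {ι : Type} [Fintype ι] [DecidableEq ι] {k : ℕ}

def permEquiv (π : Equiv.Perm (Fin k)) :
    ((Fin k → ι) × (Fin k → ι)) ≃ ((Fin k → ι) × (Fin k → ι)) where
  toFun x := (x.1 ∘ π, x.2 ∘ π)
  invFun x := (x.1 ∘ ⇑π⁻¹, x.2 ∘ ⇑π⁻¹)
  left_inv x := by
    refine Prod.ext ?_ ?_ <;> funext i <;> simp [Function.comp]
  right_inv x := by
    refine Prod.ext ?_ ?_ <;> funext i <;> simp [Function.comp]

lemma permEquiv_symm (π : Equiv.Perm (Fin k)) :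
    (permEquiv (ι := ι) π).symm = permEquiv π⁻¹ := rfl

def permM (π : Equiv.Perm (Fin k))
    (M : Matrix ((Fin k → ι) × (Fin k → ι)) ((Fin k → ι) × (Fin k → ι)) ℂ) :
    Matrix ((Fin k → ι) × (Fin k → ι)) ((Fin k → ι) × (Fin k → ι)) ℂ :=
  M.submatrix (permEquiv π) (permEquiv π)

lemma symmetrize_eq
    (Q : Matrix ((Fin k → ι) × (Fin k → ι)) ((Fin k → ι) × (Fin k → ι)) ℂ) :
    symmetrize Q = (1 / (Nat.factorial k : ℂ)) • ∑ π : Equiv.Perm (Fin k), permM π Q := rfl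

lemma trace_mul_expand {n : Type} [Fintype n] (A B : Matrix n n ℂ) :
    Matrix.trace (A * B) = ∑ i, ∑ j, A i j * B j i := by
  simp [Matrix.trace, Matrix.mul_apply, Matrix.diag]

lemma trace_permM_mul (π : Equiv.Perm (Fin k))
    (M N : Matrix ((Fin k → ι) × (Fin k → ι)) ((Fin k → ι) × (Fin k → ι)) ℂ) :
    Matrix.trace (permM π M * N) = Matrix.trace (M * permM π⁻¹ N) := by
  rw [trace_mul_expand, trace_mul_expand]
  refine Fintype.sum_equiv (permEquiv π) _ _ (fun i => ?_)
  refine Fintype.sum_equiv (permEquiv π) _ _ (fun j => ?_)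
  simp [permM, Matrix.submatrix_apply, ← permEquiv_symm, Equiv.symm_apply_apply]

lemma trace_symmetrize_mul
    (M N : Matrix ((Fin k → ι) × (Fin k → ι)) ((Fin k → ι) × (Fin k → ι)) ℂ) :
    Matrix.trace (symmetrize M * N) = Matrix.trace (M * symmetrize N) := by
  rw [symmetrize_eq M, symmetrize_eq N, Matrix.smul_mul, Matrix.mul_smul, trace_smul, trace_smul,
    Matrix.sum_mul, Matrix.mul_sum, trace_sum, trace_sum]
  congr 1
  rw [Finset.sum_congr rfl (fun π _ => trace_permM_mul π M N)]
  exact Fintype.sum_equiv (Equiv.inv _) _ _ (fun π => rfl)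

lemma symmetrize_of_permSymmetric
    {τ : Matrix ((Fin k → ι) × (Fin k → ι)) ((Fin k → ι) × (Fin k → ι)) ℂ}
    (hτ : PermSymmetric τ) : symmetrize τ = τ := by
  have h0 : ((Nat.factorial k : ℂ)) ≠ 0 := Nat.cast_ne_zero.mpr (Nat.factorial_ne_zero k)
  ext x y
  simp only [symmetrize, Matrix.smul_apply, Matrix.sum_apply, Matrix.of_apply]
  rw [Finset.sum_congr rfl (fun π _ => hτ π x y)]
  simp only [Finset.sum_const, Finset.card_univ, Fintype.card_perm, Fintype.card_fin,
    smul_eq_mul, nsmul_eq_mul]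
  field_simp

lemma trace_permM (π : Equiv.Perm (Fin k))
    (M : Matrix ((Fin k → ι) × (Fin k → ι)) ((Fin k → ι) × (Fin k → ι)) ℂ) :
    Matrix.trace (permM π M) = Matrix.trace M := by
  simp only [Matrix.trace, Matrix.diag, permM, Matrix.submatrix_apply]
  exact Fintype.sum_equiv (permEquiv π) _ _ (fun i => rfl)

lemma trace_symmetrize
    (M : Matrix ((Fin k → ι) × (Fin k → ι)) ((Fin k → ι) × (Fin k → ι)) ℂ) :
    Matrix.trace (symmetrize M) = Matrix.trace M := by
  have h0 : ((Nat.factorial k : ℂ)) ≠ 0 := Nat.cast_ne_zero.mpr (Nat.factorial_ne_zero k)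
  rw [symmetrize_eq, trace_smul, trace_sum,
    Finset.sum_congr rfl (fun π _ => trace_permM π M)]
  simp only [Finset.sum_const, Finset.card_univ, Fintype.card_perm, Fintype.card_fin,
    smul_eq_mul, nsmul_eq_mul]
  field_simp

lemma symmetrize_isHermitian
    {M : Matrix ((Fin k → ι) × (Fin k → ι)) ((Fin k → ι) × (Fin k → ι)) ℂ}
    (hM : M.IsHermitian) : (symmetrize M).IsHermitian := by
  unfold Matrix.IsHermitian
  rw [symmetrize_eq, Matrix.conjTranspose_smul, Matrix.conjTranspose_sum]
  congr 1
  · simp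
  · exact Finset.sum_congr rfl fun π _ => by
      simp [permM, Matrix.conjTranspose_submatrix, hM.eq]

lemma ofReal_mul_nonneg' {r : ℝ} (hr : 0 ≤ r) {z : ℂ} (hz : 0 ≤ z) : 0 ≤ (r : ℂ) * z := by
  rw [Complex.le_def] at hz ⊢
  constructor
  · simpa using mul_nonneg hr (by simpa using hz.1)
  · simp [Complex.mul_im, ← hz.2]

lemma posSemidef_real_smul {n : Type} [Fintype n] {M : Matrix n n ℂ} (hM : M.PosSemidef)
    {r : ℝ} (hr : 0 ≤ r) : (((r : ℂ)) • M).PosSemidef := by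
  constructor
  · unfold Matrix.IsHermitian
    rw [Matrix.conjTranspose_smul, hM.1.eq]
    congr 1
    simp [Complex.star_def, Complex.conj_ofReal]
  · intro x
    have h := hM.2 x
    exact (hM.smul (a := (r : ℂ)) (Complex.zero_le_real.mpr hr)).2 x

lemma posSemidef_symmetrize
    {ω : Matrix ((Fin k → ι) × (Fin k → ι)) ((Fin k → ι) × (Fin k → ι)) ℂ}
    (hω : ω.PosSemidef) : (symmetrize ω).PosSemidef := by
  rw [symmetrize_eq]
  have hsum : (∑ π : Equiv.Perm (Fin k), permM π ω).PosSemidef :=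
    Finset.sum_induction _ _ (fun a b ha hb => ha.add hb) Matrix.PosSemidef.zero
      (fun π _ => hω.submatrix _)
  have hc : (1 / (Nat.factorial k : ℂ)) = (((1 / (Nat.factorial k : ℝ)) : ℝ) : ℂ) := by
    push_cast; ring
  rw [hc]
  exact posSemidef_real_smul hsum (by positivity)

lemma permSymmetric_symmetrize
    (ω : Matrix ((Fin k → ι) × (Fin k → ι)) ((Fin k → ι) × (Fin k → ι)) ℂ) :
    PermSymmetric (symmetrize ω) := by
  intro σ x y
  simp only [symmetrize, Matrix.smul_apply, Matrix.sum_apply, Matrix.of_apply]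
  congr 1
  exact Fintype.sum_equiv (Equiv.mulLeft σ) _ _ (fun π => rfl)


lemma kron_permM_conj (π : Equiv.Perm (Fin k)) (A B : Matrix (Fin 2) (Fin k → ι) ℂ)
    (ω : Matrix ((Fin k → ι) × (Fin k → ι)) ((Fin k → ι) × (Fin k → ι)) ℂ) :
    kron A B * permM π ω * (kron A B)ᴴ =
      kron (A.submatrix id (fun u => u ∘ ⇑π⁻¹)) (B.submatrix id (fun u => u ∘ ⇑π⁻¹)) * ω *
        (kron (A.submatrix id (fun u => u ∘ ⇑π⁻¹)) (B.submatrix id (fun u => u ∘ ⇑π⁻¹)))ᴴ := by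
  have h1 : ∀ (u : (Fin k → ι) × (Fin k → ι)), ((permEquiv (ι := ι) π u).1 ∘ ⇑π⁻¹) = u.1 := by
    intro u; funext t; simp [permEquiv, Function.comp]
  have h2 : ∀ (u : (Fin k → ι) × (Fin k → ι)), ((permEquiv (ι := ι) π u).2 ∘ ⇑π⁻¹) = u.2 := by
    intro u; funext t; simp [permEquiv, Function.comp]
  ext p q
  simp only [Matrix.mul_apply, Matrix.conjTranspose_apply, Finset.sum_mul]
  refine Fintype.sum_equiv (permEquiv π) _ _ (fun j => ?_)
  refine Fintype.sum_equiv (permEquiv π) _ _ (fun i => ?_)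
  simp [permM, kron, Matrix.submatrix_apply, h1, h2]
  rw [← Equiv.Perm.inv_def]
  simp only [h1, h2]

lemma singleCopyUndistillable_symmetrize
    {ω : Matrix ((Fin k → ι) × (Fin k → ι)) ((Fin k → ι) × (Fin k → ι)) ℂ}
    (hω : SingleCopyUndistillable ω) : SingleCopyUndistillable (symmetrize ω) := by
  intro A B
  rw [symmetrize_eq]
  rw [Matrix.mul_smul, Matrix.smul_mul, Matrix.smul_mul, trace_smul]
  have hc : (1 / (Nat.factorial k : ℂ)) = (((1 / (Nat.factorial k : ℝ)) : ℝ) : ℂ) := by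
    push_cast; ring
  rw [smul_eq_mul, hc, Complex.re_ofReal_mul]
  rw [Matrix.mul_sum, Matrix.sum_mul, Matrix.sum_mul, trace_sum, Complex.re_sum]
  have hterm : ∀ π : Equiv.Perm (Fin k),
      (Matrix.trace (kron A B * permM π ω * (kron A B)ᴴ *
        (phiD 2 - (1 / 2 : ℂ) • 1))).re ≤ 0 := by
    intro π
    rw [kron_permM_conj]
    exact hω _ _
  refine mul_nonpos_iff.mpr (Or.inl ⟨by positivity, ?_⟩)
  exact Finset.sum_nonpos fun π _ => hterm π

lemma fillAt_same (m : Fin k) (a : ι) (r : {i : Fin k // i ≠ m} → ι) :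
    fillAt m a r m = a := dif_pos rfl

lemma fillAt_ne (m : Fin k) (a : ι) (r : {i : Fin k // i ≠ m} → ι) (i : Fin k) (h : i ≠ m) :
    fillAt m a r i = r ⟨i, h⟩ := dif_neg h

def factorEquiv (m : Fin k) :
    ((ι × ι) × (({i : Fin k // i ≠ m} → ι) × ({i : Fin k // i ≠ m} → ι))) ≃
      ((Fin k → ι) × (Fin k → ι)) where
  toFun u := (fillAt m u.1.1 u.2.1, fillAt m u.1.2 u.2.2)
  invFun x := ((x.1 m, x.2 m), (fun i => x.1 i, fun i => x.2 i))
  left_inv u := by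
    obtain ⟨⟨a, b⟩, r, s⟩ := u
    refine Prod.ext (Prod.ext ?_ ?_) (Prod.ext ?_ ?_)
    · exact fillAt_same m a r
    · exact fillAt_same m b s
    · funext i; simp only [fillAt_ne m a r i.1 i.2, Subtype.coe_eta]
    · funext i; simp only [fillAt_ne m b s i.1 i.2, Subtype.coe_eta]
  right_inv x := by
    refine Prod.ext ?_ ?_ <;> funext j <;>
      · by_cases h : j = m
        · subst h; exact fillAt_same _ _ _
        · exact fillAt_ne _ _ _ j h

lemma firstFactorOp_apply_factorEquiv (hk : 0 < k) (X : Matrix (ι × ι) (ι × ι) ℂ)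
    (u v : (ι × ι) × (({i : Fin k // i ≠ (⟨0, hk⟩ : Fin k)} → ι) ×
      ({i : Fin k // i ≠ (⟨0, hk⟩ : Fin k)} → ι))) :
    firstFactorOp k hk X (factorEquiv ⟨0, hk⟩ u) (factorEquiv ⟨0, hk⟩ v) =
      if u.2 = v.2 then X u.1 v.1 else 0 := by
  obtain ⟨⟨a, b⟩, rA, rB⟩ := u
  obtain ⟨⟨c, d⟩, sA, sB⟩ := v
  simp only [firstFactorOp, factorEquiv, Equiv.coe_fn_mk, Matrix.of_apply]
  rw [fillAt_same, fillAt_same, fillAt_same, fillAt_same]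
  by_cases h : ((rA, rB) : ({i : Fin k // i ≠ (⟨0, hk⟩ : Fin k)} → ι) ×
      ({i : Fin k // i ≠ (⟨0, hk⟩ : Fin k)} → ι)) = (sA, sB)
  · rw [if_pos h]
    obtain ⟨h1, h2⟩ := Prod.mk.injEq .. ▸ h
    subst h1; subst h2
    rw [Finset.prod_eq_one, mul_one]
    intro i _
    by_cases hi : i = (⟨0, hk⟩ : Fin k)
    · rw [if_pos hi]
    · rw [if_neg hi]
      simp [fillAt_ne _ a rA i hi, fillAt_ne _ c rA i hi,
        fillAt_ne _ b rB i hi, fillAt_ne _ d rB i hi]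
  · rw [if_neg h]
    have hne : rA ≠ sA ∨ rB ≠ sB := by
      by_contra hc; push_neg at hc
      exact h (by rw [hc.1, hc.2])
    have hzero : (∏ i : Fin k, if i = (⟨0, hk⟩ : Fin k) then 1
        else (if fillAt ⟨0, hk⟩ a rA i = fillAt ⟨0, hk⟩ c sA i ∧
          fillAt ⟨0, hk⟩ b rB i = fillAt ⟨0, hk⟩ d sB i
          then (1:ℂ) else 0)) = 0 := by
      rcases hne with h1 | h1
      · obtain ⟨i, hi⟩ := Function.ne_iff.mp h1
        refine Finset.prod_eq_zero (Finset.mem_univ (i : Fin k)) ?_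
        rw [if_neg i.2, if_neg]
        rintro ⟨c1, _⟩
        rw [fillAt_ne _ a rA i.1 i.2, fillAt_ne _ c sA i.1 i.2, Subtype.coe_eta] at c1
        exact hi c1
      · obtain ⟨i, hi⟩ := Function.ne_iff.mp h1
        refine Finset.prod_eq_zero (Finset.mem_univ (i : Fin k)) ?_
        rw [if_neg i.2, if_neg]
        rintro ⟨_, c2⟩
        rw [fillAt_ne _ b rB i.1 i.2, fillAt_ne _ d sB i.1 i.2, Subtype.coe_eta] at c2
        exact hi c2
    rw [hzero, mul_zero]



lemma trace_firstFactorOp_mul (hk : 0 < k) (X : Matrix (ι × ι) (ι × ι) ℂ)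
    (σ : Matrix ((Fin k → ι) × (Fin k → ι)) ((Fin k → ι) × (Fin k → ι)) ℂ) :
    Matrix.trace (firstFactorOp k hk X * σ) =
      Matrix.trace (X * reduceAt (⟨0, hk⟩ : Fin k) σ) := by
  rw [trace_mul_expand, trace_mul_expand]
  calc
    ∑ x, ∑ y, firstFactorOp k hk X x y * σ y x
        = ∑ u, ∑ v, firstFactorOp k hk X (factorEquiv ⟨0, hk⟩ u) (factorEquiv ⟨0, hk⟩ v) *
            σ (factorEquiv ⟨0, hk⟩ v) (factorEquiv ⟨0, hk⟩ u) := by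
          rw [← Equiv.sum_comp (factorEquiv (ι := ι) ⟨0, hk⟩)
            (fun x => ∑ y, firstFactorOp k hk X x y * σ y x)]
          exact Finset.sum_congr rfl fun u _ =>
            (Equiv.sum_comp (factorEquiv (ι := ι) ⟨0, hk⟩) _).symm
    _ = ∑ u, ∑ v, (if u.2 = v.2 then X u.1 v.1 else 0) *
            σ (factorEquiv ⟨0, hk⟩ v) (factorEquiv ⟨0, hk⟩ u) := by
          refine Finset.sum_congr rfl fun u _ => Finset.sum_congr rfl fun v _ => ?_
          rw [firstFactorOp_apply_factorEquiv]
    _ = ∑ u, ∑ q, X u.1 q *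
            σ (factorEquiv ⟨0, hk⟩ (q, u.2)) (factorEquiv ⟨0, hk⟩ u) := by
          refine Finset.sum_congr rfl fun u _ => ?_
          rw [Fintype.sum_prod_type]
          refine Finset.sum_congr rfl fun q _ => ?_
          rw [Finset.sum_congr rfl (fun v2 _ => by rw [ite_mul, zero_mul])]
          simp
    _ = ∑ p, ∑ q, X p q * reduceAt (⟨0, hk⟩ : Fin k) σ q p := by
          rw [Fintype.sum_prod_type]
          refine Finset.sum_congr rfl fun p _ => ?_
          rw [Finset.sum_comm]
          refine Finset.sum_congr rfl fun q _ => ?_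
          rw [show (reduceAt (⟨0, hk⟩ : Fin k) σ) q p = ∑ r : ({i : Fin k // i ≠ (⟨0, hk⟩ : Fin k)} → ι) ×
              ({i : Fin k // i ≠ (⟨0, hk⟩ : Fin k)} → ι),
              σ (factorEquiv ⟨0, hk⟩ (q, r)) (factorEquiv ⟨0, hk⟩ (p, r)) from by
            simp only [reduceAt, Matrix.of_apply, factorEquiv, Equiv.coe_fn_mk]
            rw [Fintype.sum_prod_type]]
          rw [Finset.mul_sum]

lemma trace_reduceAt (m : Fin k)
    (σ : Matrix ((Fin k → ι) × (Fin k → ι)) ((Fin k → ι) × (Fin k → ι)) ℂ) :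
    Matrix.trace (reduceAt m σ) = Matrix.trace σ := by
  simp only [Matrix.trace, Matrix.diag, reduceAt, Matrix.of_apply]
  conv_rhs => rw [← Equiv.sum_comp (factorEquiv (ι := ι) m) (fun x => σ x x)]
  conv_rhs => rw [Fintype.sum_prod_type]
  refine Finset.sum_congr rfl fun p _ => ?_
  conv_rhs => rw [Fintype.sum_prod_type]
  rfl

def fillMap (m : Fin k)
    (r : ({i : Fin k // i ≠ m} → ι) × ({i : Fin k // i ≠ m} → ι)) :
    (ι × ι) → ((Fin k → ι) × (Fin k → ι)) :=
  fun p => (fillAt m p.1 r.1, fillAt m p.2 r.2)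

lemma reduceAt_eq_sum (m : Fin k)
    (σ : Matrix ((Fin k → ι) × (Fin k → ι)) ((Fin k → ι) × (Fin k → ι)) ℂ) :
    reduceAt m σ = ∑ r : ({i : Fin k // i ≠ m} → ι) × ({i : Fin k // i ≠ m} → ι),
      σ.submatrix (fillMap m r) (fillMap m r) := by
  ext p q
  simp only [reduceAt, Matrix.of_apply, Matrix.sum_apply, Matrix.submatrix_apply, fillMap]
  rw [Fintype.sum_prod_type]

lemma posSemidef_reduceAt (m : Fin k)
    {σ : Matrix ((Fin k → ι) × (Fin k → ι)) ((Fin k → ι) × (Fin k → ι)) ℂ}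
    (hσ : σ.PosSemidef) : (reduceAt m σ).PosSemidef := by
  rw [reduceAt_eq_sum]
  exact Finset.sum_induction _ _ (fun a b ha hb => ha.add hb) Matrix.PosSemidef.zero
    (fun r _ => hσ.submatrix _)

lemma firstFactorOp_isHermitian (hk : 0 < k) {X : Matrix (ι × ι) (ι × ι) ℂ}
    (hX : X.IsHermitian) : (firstFactorOp k hk X).IsHermitian := by
  ext x y
  simp only [firstFactorOp, Matrix.conjTranspose_apply, Matrix.of_apply]
  have hP : star (∏ i : Fin k, if i = (⟨0, hk⟩ : Fin k) then (1:ℂ)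
        else if y.1 i = x.1 i ∧ y.2 i = x.2 i then 1 else 0)
      = ∏ i : Fin k, if i = (⟨0, hk⟩ : Fin k) then (1:ℂ)
        else if x.1 i = y.1 i ∧ x.2 i = y.2 i then 1 else 0 := by
    rw [star_prod]
    refine Finset.prod_congr rfl fun i _ => ?_
    by_cases hi : i = (⟨0, hk⟩ : Fin k)
    · simp [hi]
    · simp only [if_neg hi, apply_ite (star : ℂ → ℂ), star_one, star_zero]
      exact if_congr (and_congr eq_comm eq_comm) rfl rfl
  have hXc : star (X (y.1 ⟨0, hk⟩, y.2 ⟨0, hk⟩) (x.1 ⟨0, hk⟩, x.2 ⟨0, hk⟩))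
      = X (x.1 ⟨0, hk⟩, x.2 ⟨0, hk⟩) (y.1 ⟨0, hk⟩, y.2 ⟨0, hk⟩) := by
    conv_rhs => rw [← hX]
    rfl
  rw [star_mul', hP, hXc, mul_comm]


end MainAux


/-- **Lemma 4 (Dual cone of k-copy undistillable states).**
Every `X ∈ T_k*` satisfies `X ⊗ I^{⊗(k−1)} = Y + Q` with `Y` in the dual cone of
the single-copy undistillable states and `Q` in the dual cone of the
permutation-symmetric states on `ℋ^{⊗k}`. -/
theorem dualCone_copyCorr_decomposition (d k : ℕ) (hk : 0 < k)
    (X : Matrix (Fin d × Fin d) (Fin d × Fin d) ℂ)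
    (hX : X ∈ dualCone {ρ : Matrix (Fin d × Fin d) (Fin d × Fin d) ℂ |
      IsState ρ ∧ CopyCorrKUndistillable (Fin d) k hk ρ}) :
    ∃ Y Q : Matrix ((Fin k → Fin d) × (Fin k → Fin d))
        ((Fin k → Fin d) × (Fin k → Fin d)) ℂ,
      Y ∈ dualCone {ω : Matrix ((Fin k → Fin d) × (Fin k → Fin d))
          ((Fin k → Fin d) × (Fin k → Fin d)) ℂ |
        IsState ω ∧ SingleCopyUndistillable ω} ∧
      Q ∈ dualCone {ω : Matrix ((Fin k → Fin d) × (Fin k → Fin d))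
          ((Fin k → Fin d) × (Fin k → Fin d)) ℂ |
        IsState ω ∧ PermSymmetric ω} ∧
      firstFactorOp k hk X = Y + Q := by
  classical
  have hXh : X.IsHermitian := hX.1
  set Z := firstFactorOp k hk X with hZdef
  refine ⟨symmetrize Z, Z - symmetrize Z, ⟨?_, ?_⟩, ⟨?_, ?_⟩, by abel⟩
  · exact symmetrize_isHermitian (firstFactorOp_isHermitian hk hXh)
  · rintro ω ⟨hstate, hund⟩
    have h1 : Matrix.trace (symmetrize Z * ω) =
        Matrix.trace (X * reduceAt (⟨0, hk⟩ : Fin k) (symmetrize ω)) := by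
      rw [trace_symmetrize_mul, hZdef, trace_firstFactorOp_mul hk]
    rw [h1]
    refine hX.2 _ ⟨⟨posSemidef_reduceAt _ (posSemidef_symmetrize hstate.1), ?_⟩, ?_⟩
    · rw [trace_reduceAt, trace_symmetrize, hstate.2]
    · exact ⟨symmetrize ω,
        ⟨posSemidef_symmetrize hstate.1, by rw [trace_symmetrize, hstate.2]⟩,
        permSymmetric_symmetrize ω, singleCopyUndistillable_symmetrize hund, rfl⟩
  · exact (firstFactorOp_isHermitian hk hXh).sub
      (symmetrize_isHermitian (firstFactorOp_isHermitian hk hXh))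
  · rintro τ ⟨hstate, hsym⟩
    have h2 : Matrix.trace ((Z - symmetrize Z) * τ) = 0 := by
      rw [Matrix.sub_mul, Matrix.trace_sub, trace_symmetrize_mul,
        symmetrize_of_permSymmetric hsym, sub_self]
    rw [h2]
    simp
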